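/- Let G be a finite directed graph with a unique source s and a unique sink t, and let C be a subset of the vertices. A sequence X of vertices of G is C-safe (i.e., for every set P of s-t walks such that each vertex of C lies on some walk of P, some walk of P contains X as a subsequence) if and only if there exists a vertex v in C such that X is a subsequence of the extension ext(v), defined as the sequence of s-dominators of v (in order from s to v) concatenated with the sequence of t-dominators of v (in order from v to t). -/

import Mathlib

namespace FD

variable {V : Type*}

/-- A walk: nonempty vertex sequence with consecutive pairs edges. -/
def IsWalk (E : V → V → Prop) (l : List V) : Prop := l ≠ [] ∧ l.Chain' E

/-- A walk from `s` to `t`. -/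
def IsWalkFromTo (E : V → V → Prop) (s t : V) (l : List V) : Prop :=
  IsWalk E l ∧ l.head? = some s ∧ l.getLast? = some t

/-- A path from `s` to `t`: a walk with no repeated vertices. -/
def IsPathFromTo (E : V → V → Prop) (s t : V) (l : List V) : Prop :=
  IsWalkFromTo E s t l ∧ l.Nodup

/-- `s` is the unique source: a vertex has no incoming edge iff it is `s`. -/
def UniqueSource (E : V → V → Prop) (s : V) : Prop := ∀ v, (¬ ∃ u, E u v) ↔ v = s

/-- `t` is the unique sink: a vertex has no outgoing edge iff it is `t`. -/
def UniqueSink (E : V → V → Prop) (t : V) : Prop := ∀ v, (¬ ∃ w, E v w) ↔ v = t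

/-- `u` s-dominates `v`: every `s`-`v` path contains `u`. -/
def SDom (E : V → V → Prop) (s u v : V) : Prop := ∀ p, IsPathFromTo E s v p → u ∈ p

/-- `u` t-dominates `v`: every `v`-`t` path contains `u`. -/
def TDom (E : V → V → Prop) (t u v : V) : Prop := ∀ p, IsPathFromTo E v t p → u ∈ p

/-- `l` is the chain of s-dominators of `v`, listed in dominance order from `s` to `v`. -/
def IsSDomChain (E : V → V → Prop) (s v : V) (l : List V) : Prop :=
  l.Nodup ∧ (∀ u, u ∈ l ↔ SDom E s u v) ∧
    l.Chain' (fun a b => SDom E s a b) ∧ l.head? = some s ∧ l.getLast? = some v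

/-- `l` is the chain of t-dominators of `v`, listed in order from `v` to `t`. -/
def IsTDomChain (E : V → V → Prop) (t v : V) (l : List V) : Prop :=
  l.Nodup ∧ (∀ u, u ∈ l ↔ TDom E t u v) ∧
    l.Chain' (fun a b => TDom E t b a) ∧ l.head? = some v ∧ l.getLast? = some t

/-- `x = ext(v)`: the s-dominator chain of `v` (from `s` to `v`) concatenated with the
t-dominator chain of `v` (from `v` to `t`), with the duplicate `v` removed. -/
def IsExtension (E : V → V → Prop) (s t v : V) (x : List V) : Prop :=
  ∃ ds dt, IsSDomChain E s v ds ∧ IsTDomChain E t v dt ∧ x = ds ++ dt.tail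

/-- `P` is a `C`-walk cover: a set of `s`-`t` walks such that every vertex of `C`
lies on some walk of `P`. -/
def WalkCover (E : V → V → Prop) (s t : V) (C : Set V) (P : Set (List V)) : Prop :=
  (∀ w ∈ P, IsWalkFromTo E s t w) ∧ ∀ c ∈ C, ∃ w ∈ P, c ∈ w

/-- `X` is a `C`-safe sequence: every `C`-walk cover contains a walk having `X`
as a subsequence. -/
def SafeSeq (E : V → V → Prop) (s t : V) (C : Set V) (X : List V) : Prop :=
  ∀ P, WalkCover E s t C P → ∃ w ∈ P, X.Sublist w

/-- The list of edges traversed by a walk, in order (with multiplicity). -/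
def walkEdges (l : List V) : List (V × V) := l.zip l.tail

/-- `idoms` is the immediate s-dominator (parent in the s-dominator tree) function:
`idoms s = s`, and for `v ≠ s`, `idoms v` is a strict s-dominator of `v` that is
s-dominated by every strict s-dominator of `v`. -/
def IsIdomS (E : V → V → Prop) (s : V) (idoms : V → V) : Prop :=
  idoms s = s ∧ ∀ v, v ≠ s → idoms v ≠ v ∧ SDom E s (idoms v) v ∧
    ∀ u, u ≠ v → SDom E s u v → SDom E s u (idoms v)

/-- Immediate t-dominator (parent in the t-dominator tree) function. -/
def IsIdomT (E : V → V → Prop) (t : V) (idomt : V → V) : Prop :=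
  idomt t = t ∧ ∀ v, v ≠ t → idomt v ≠ v ∧ TDom E t (idomt v) v ∧
    ∀ u, u ≠ v → TDom E t u v → TDom E t u (idomt v)

/-- In the tree with parent function `par` rooted at `root`, `c` is the unique child
of `p`. -/
def UniqueChild (par : V → V) (root c p : V) : Prop :=
  c ≠ root ∧ par c = p ∧ ∀ y, y ≠ root → par y = p → y = c

/-- A univocal path `v₁ … v_k`: in the t-dominator tree each `v_{i+1}` has `v_i`
as its unique child, and `v_k … v_1` is a path in the s-dominator tree where each
vertex but the deepest (`v_k`) has exactly one child. -/
def IsUnivocal (idoms idomt : V → V) (s t : V) (l : List V) : Prop :=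
  l ≠ [] ∧ l.Chain' (fun a b => UniqueChild idomt t a b ∧ UniqueChild idoms s b a)

/-- A maximal univocal path: not properly contained in another univocal path. -/
def IsMaximalUnivocal (idoms idomt : V → V) (s t : V) (l : List V) : Prop :=
  IsUnivocal idoms idomt s t l ∧
    ∀ l', IsUnivocal idoms idomt s t l' → l <:+: l' → l' = l

/-- `X` is a maximal safe sequence for walk covers (covering all vertices):
it is safe and no proper supersequence of it is safe. -/
def MaximalSafe (E : V → V → Prop) (s t : V) (X : List V) : Prop :=
  SafeSeq E s t Set.univ X ∧ ∀ Y, X.Sublist Y → Y ≠ X → ¬ SafeSeq E s t Set.univ Y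

/-- Edge `e` reaches edge `e'`: there is a (possibly empty) path from the head of `e`
to the tail of `e'`. -/
def EReach (E : V → V → Prop) (e e' : V × V) : Prop := Relation.ReflTransGen E e.2 e'.1

/-- `P` is a cover of the edge set `C` by `s`-`t` walks. -/
def EdgeWalkCover (E : V → V → Prop) (s t : V) (C : Set (V × V)) (P : Set (List V)) : Prop :=
  (∀ w ∈ P, IsWalkFromTo E s t w) ∧ ∀ c ∈ C, ∃ w ∈ P, c ∈ walkEdges w

/-- A `C`-safe sequence of edges: every cover of `C` by `s`-`t` walks contains a walk
traversing the edges of `S` in order. -/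
def SafeEdgeSeq (E : V → V → Prop) (s t : V) (C : Set (V × V)) (S : List (V × V)) : Prop :=
  ∀ P, EdgeWalkCover E s t C P → ∃ w ∈ P, S.Sublist (walkEdges w)

open List
-- helpers

lemma mem_of_getLast?' {l : List V} {a : V} (h : l.getLast? = some a) : a ∈ l := by
  obtain ⟨h0, rfl⟩ := List.mem_getLast?_eq_getLast (show a ∈ l.getLast? from h)
  exact List.getLast_mem h0

lemma eq_cons_of_head? {l : List V} {a : V} (h : l.head? = some a) : l = a :: l.tail := by
  cases l with
  | nil => simp at h
  | cons b l =>
    simp only [List.head?_cons, Option.some.injEq] at h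
    simp [h]

lemma mem_split_first {l : List V} {a : V} (h : a ∈ l) :
    ∃ l1 l2, l = l1 ++ a :: l2 ∧ a ∉ l1 := by
  classical
  induction l with
  | nil => simp at h
  | cons b l ih =>
    by_cases hba : b = a
    · exact ⟨[], l, by simp [hba], by simp⟩
    · have ha : a ∈ l := by
        rcases List.mem_cons.mp h with h' | h'
        · exact absurd h'.symm hba
        · exact h'
      obtain ⟨l1, l2, rfl, hnot⟩ := ih ha
      exact ⟨b :: l1, l2, rfl, by
        simp only [List.mem_cons, not_or]
        exact ⟨fun h' => hba h'.symm, hnot⟩⟩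

lemma mem_split_last {l : List V} {a : V} (h : a ∈ l) :
    ∃ l1 l2, l = l1 ++ a :: l2 ∧ a ∉ l2 := by
  have h' : a ∈ l.reverse := by simpa using h
  obtain ⟨r1, r2, hr, hnot⟩ := mem_split_first h'
  refine ⟨r2.reverse, r1.reverse, ?_, by simpa using hnot⟩
  have := congrArg List.reverse hr
  simp only [List.reverse_reverse, List.reverse_append, List.reverse_cons] at this
  rw [this]; simp

lemma walk_split {E : V → V → Prop} {s z : V} {l1 l2 : List V} {a : V}
    (h : IsWalkFromTo E s z (l1 ++ a :: l2)) :
    IsWalkFromTo E s a (l1 ++ [a]) ∧ IsWalkFromTo E a z (a :: l2) := by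
  obtain ⟨⟨hne, hch⟩, hh, hl⟩ := h
  unfold List.Chain' at hch
  rw [List.isChain_split] at hch
  have hconsLast := List.getLast?_eq_getLast_of_ne_nil (List.cons_ne_nil a l2)
  rw [List.getLast?_append, hconsLast] at hl
  have hl2 : (a :: l2).getLast? = some z := by
    rw [hconsLast]
    simpa using hl
  have hh2 : (l1 ++ [a]).head? = some s := by
    rw [List.head?_append] at hh ⊢
    simpa using hh
  exact ⟨⟨⟨by simp, hch.1⟩, hh2, by simp⟩, ⟨⟨List.cons_ne_nil _ _, hch.2⟩, by simp, hl2⟩⟩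

lemma exists_path (E : V → V → Prop) (a b : V) :
    ∀ n (w : List V), w.length ≤ n → IsWalkFromTo E a b w →
      ∃ p, IsPathFromTo E a b p ∧ ∀ x ∈ p, x ∈ w := by
  intro n
  induction n with
  | zero =>
    intro w hlen hw
    exact absurd (List.length_eq_zero_iff.mp (Nat.le_zero.mp hlen)) hw.1.1
  | succ n ih =>
    intro w hlen hw
    by_cases hnd : w.Nodup
    · exact ⟨w, ⟨hw, hnd⟩, fun x hx => hx⟩
    · obtain ⟨x, hdup⟩ := List.exists_duplicate_iff_not_nodup.mpr hnd
      have hxx : [x, x] <+ w := List.duplicate_iff_sublist.mp hdup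
      have hxw : x ∈ w := hxx.subset (by simp)
      obtain ⟨l1, r1, rfl, hnotl1⟩ := mem_split_first hxw
      have hxr1 : x ∈ r1 := by
        rw [List.sublist_append_iff] at hxx
        obtain ⟨u, v, huv, hu, hv⟩ := hxx
        have hu0 : u = [] := by
          cases u with
          | nil => rfl
          | cons c u' =>
            exfalso
            have hcx : c = x := by
              have := huv
              simp only [List.cons_append, List.cons.injEq] at this
              exact this.1.symm
            subst hcx
            exact hnotl1 (hu.subset (by simp))
        subst hu0
        simp only [List.nil_append] at huv
        subst huv
        exact List.singleton_sublist.mp (List.cons_sublist_cons.mp hv)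
      obtain ⟨l2, l3, rfl, _⟩ := mem_split_first hxr1
      obtain ⟨⟨hne, hch⟩, hh, hl⟩ := hw
      unfold List.Chain' at hch
      rw [List.isChain_split] at hch
      have hch2 : (x :: l2 ++ x :: l3).Chain' E := hch.2
      unfold List.Chain' at hch2
      rw [show x :: l2 ++ x :: l3 = (x :: l2) ++ x :: l3 from rfl, List.isChain_split] at hch2
      have hw' : IsWalkFromTo E a b (l1 ++ x :: l3) := by
        refine ⟨⟨by simp, ?_⟩, ?_, ?_⟩
        · unfold List.Chain'
          rw [List.isChain_split]
          exact ⟨hch.1, hch2.2⟩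
        · rw [List.head?_append] at hh ⊢
          simpa using hh
        · rw [List.getLast?_append] at hl ⊢
          have h1 := List.getLast?_eq_getLast_of_ne_nil (List.cons_ne_nil x l3)
          rw [show x :: (l2 ++ x :: l3) = (x :: l2) ++ x :: l3 by simp] at hl
          rw [List.getLast?_append, h1] at hl
          rw [h1]
          simpa using hl
      have hlen' : (l1 ++ x :: l3).length ≤ n := by
        have := hlen
        simp only [List.length_append, List.length_cons] at this ⊢
        omega
      obtain ⟨p, hp, hsub⟩ := ih (l1 ++ x :: l3) hlen' hw'
      refine ⟨p, hp, fun y hy => ?_⟩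
      have := hsub y hy
      simp only [List.mem_append, List.mem_cons] at this ⊢
      tauto

lemma sdom_trans {E : V → V → Prop} {s a b c : V}
    (hab : SDom E s a b) (hbc : SDom E s b c) : SDom E s a c := by
  intro p hp
  have hb : b ∈ p := hbc p hp
  obtain ⟨l1, l2, rfl, _⟩ := mem_split_first hb
  have hsplit := walk_split hp.1
  have hpath : IsPathFromTo E s b (l1 ++ [b]) :=
    ⟨hsplit.1, hp.2.sublist (List.Sublist.append_left
      (List.cons_sublist_cons.mpr (List.nil_sublist l2)) l1)⟩
  have ha := hab _ hpath
  rcases List.mem_append.mp ha with h | h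
  · exact List.mem_append.mpr (Or.inl h)
  · simp only [List.mem_singleton] at h
    subst h
    exact List.mem_append.mpr (Or.inr (by simp))

lemma chain_sublist_walk (E : V → V → Prop) (s : V) (c : List V) :
    c.Pairwise (SDom E s) → c.Nodup →
    ∀ z w, c.getLast? = some z → IsWalkFromTo E s z w → c <+ w := by
  induction c using List.reverseRecOn with
  | nil => intro _ _ z w _ _; exact List.nil_sublist w
  | append_singleton c' z' ih =>
    intro hpair hnd z w hlast hw
    have hz : z' = z := by
      rw [List.getLast?_concat] at hlast
      exact Option.some.inj hlast
    subst hz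
    by_cases hc' : c' = []
    · subst hc'
      simpa using List.singleton_sublist.mpr (mem_of_getLast?' hw.2.2)
    · obtain ⟨y, hy⟩ : ∃ y, c'.getLast? = some y :=
        ⟨c'.getLast hc', List.getLast?_eq_getLast_of_ne_nil hc'⟩
      have hymem : y ∈ c' := mem_of_getLast?' hy
      have hpa := List.pairwise_append.mp hpair
      have hyz : SDom E s y z' := hpa.2.2 y hymem z' (by simp)
      have hnda := List.nodup_append.mp hnd
      have hyne : y ≠ z' := fun h => hnda.2.2 y hymem z' (by simp) h
      obtain ⟨p, hp, hsubp⟩ := exists_path E s z' w.length w le_rfl hw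
      have hyw : y ∈ w := hsubp y (hyz p hp)
      obtain ⟨w1, w2, rfl, _⟩ := mem_split_last hyw
      have hsp := walk_split hw
      have ihc : c' <+ w1 ++ [y] := ih hpa.1 hnda.1 y (w1 ++ [y]) hy hsp.1
      have hw2ne : w2 ≠ [] := by
        intro h
        subst h
        have := hsp.2.2.2
        simp only [List.getLast?_singleton, Option.some.injEq] at this
        exact hyne this
      have hzw2 : z' ∈ w2 := by
        have hl := hsp.2.2.2
        obtain ⟨cc, w2', rfl⟩ : ∃ cc w2', w2 = cc :: w2' := by
          cases w2 with
          | nil => exact absurd rfl hw2ne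
          | cons cc w2' => exact ⟨cc, w2', rfl⟩
        rw [List.getLast?_cons_cons] at hl
        exact mem_of_getLast?' hl
      have : c' ++ [z'] <+ (w1 ++ [y]) ++ w2 :=
        List.Sublist.append ihc (List.singleton_sublist.mpr hzw2)
      simpa using this

lemma walk_swap {E : V → V → Prop} {a b : V} {w : List V}
    (h : IsWalkFromTo E a b w) : IsWalkFromTo (fun x y => E y x) b a w.reverse := by
  obtain ⟨⟨hne, hch⟩, hh, hl⟩ := h
  refine ⟨⟨by simpa using hne, ?_⟩, by simpa using hl, by simpa using hh⟩
  unfold List.Chain'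
  rw [List.isChain_reverse]
  exact hch

lemma path_swap {E : V → V → Prop} {a b : V} {w : List V} :
    IsPathFromTo E a b w ↔ IsPathFromTo (fun x y => E y x) b a w.reverse := by
  constructor
  · rintro ⟨hw, hnd⟩
    exact ⟨walk_swap hw, List.nodup_reverse.mpr hnd⟩
  · rintro ⟨hw, hnd⟩
    have := walk_swap hw
    simp only [List.reverse_reverse] at this
    exact ⟨this, List.nodup_reverse.mp hnd⟩

lemma tdom_iff_sdom_swap {E : V → V → Prop} {t u v : V} :
    TDom E t u v ↔ SDom (fun x y => E y x) t u v := by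
  constructor
  · intro h p hp
    have hp' : IsPathFromTo E v t p.reverse := path_swap.mpr (by simpa using hp)
    simpa using h _ hp'
  · intro h p hp
    have := h p.reverse (path_swap.mp hp)
    simpa using this

lemma tchain_schain {E : V → V → Prop} {t v : V} {T : List V} (h : IsTDomChain E t v T) :
    IsSDomChain (fun x y => E y x) t v T.reverse := by
  obtain ⟨hnd, hmem, hch, hhd, hlt⟩ := h
  refine ⟨List.nodup_reverse.mpr hnd, ?_, ?_, by simpa using hlt, by simpa using hhd⟩
  · intro u
    rw [List.mem_reverse, hmem u, tdom_iff_sdom_swap]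
  · unfold List.Chain'
    rw [List.isChain_reverse]
    exact hch.imp (fun a b hab => tdom_iff_sdom_swap.mp hab)

lemma schain_sublist_walk {E : V → V → Prop} {s v : V} {D w : List V}
    (hD : IsSDomChain E s v D) (hw : IsWalkFromTo E s v w) : D <+ w := by
  haveI : IsTrans V (SDom E s) := ⟨fun _ _ _ => sdom_trans⟩
  haveI : Trans (SDom E s) (SDom E s) (SDom E s) := ⟨sdom_trans⟩
  exact chain_sublist_walk E s D (List.isChain_iff_pairwise.mp hD.2.2.1) hD.1 v w hD.2.2.2.2 hw

lemma subl_of_all_paths {E : V → V → Prop} {s v : V} {D : List V}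
    (hD : IsSDomChain E s v D) {X : List V}
    (hex : ∃ p, IsPathFromTo E s v p)
    (hX : ∀ p, IsPathFromTo E s v p → X <+ p) : X <+ D := by
  classical
  obtain ⟨P0, hP0⟩ := hex
  have hDP0 : D <+ P0 := schain_sublist_walk hD hP0.1
  have hXmem : ∀ x ∈ X, x ∈ D := by
    intro x hx
    rw [hD.2.1 x]
    by_contra hns
    simp only [SDom, not_forall] at hns
    obtain ⟨p, hp, hxp⟩ := hns
    exact hxp ((hX p hp).subset hx)
  set pr : V → Bool := fun u => decide (u ∈ D) with hpr
  have hDfil : D.filter pr = D := List.filter_eq_self.mpr (fun a ha => by simp [hpr, ha])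
  have h1 : D <+ P0.filter pr := by
    have := hDP0.filter pr
    rwa [hDfil] at this
  have h2 : (P0.filter pr).length ≤ D.length := by
    apply List.Subperm.length_le
    apply List.Nodup.subperm (hP0.2.filter pr)
    intro x hx
    have := List.of_mem_filter hx
    simpa [hpr] using this
  have hF : D = P0.filter pr := h1.eq_of_length (le_antisymm h1.length_le h2)
  have hXf : X.filter pr = X := List.filter_eq_self.mpr (fun a ha => by simp [hpr, hXmem a ha])
  have : X <+ P0.filter pr := by
    have := (hX P0 hP0).filter pr
    rwa [hXf] at this
  rwa [← hF] at this

lemma walk_comp {E : V → V → Prop} {s t v : V} {P Q : List V}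
    (hP : IsWalkFromTo E s v P) (hQ : IsWalkFromTo E v t Q) :
    IsWalkFromTo E s t (P ++ Q.tail) ∧ v ∈ P ++ Q.tail := by
  have hQc : Q = v :: Q.tail := eq_cons_of_head? hQ.2.1
  have hPne : P ≠ [] := hP.1.1
  have hPlast : P.getLast? = some v := hP.2.2
  have hvP : v ∈ P := mem_of_getLast?' hPlast
  have hPdec : P.dropLast ++ [v] = P := by
    have := List.dropLast_append_getLast hPne
    rwa [show P.getLast hPne = v by
      have := List.getLast?_eq_getLast_of_ne_nil hPne
      rw [this] at hPlast
      exact Option.some.inj hPlast] at this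
  constructor
  · refine ⟨⟨by simp [hPne], ?_⟩, ?_, ?_⟩
    · unfold List.Chain'
      rw [← hPdec, List.append_assoc, List.singleton_append, List.isChain_split]
      constructor
      · rw [hPdec]; exact hP.1.2
      · rw [← hQc]; exact hQ.1.2
    · rw [List.head?_append]
      rw [hP.2.1]
      rfl
    · cases hQt : Q.tail with
      | nil => 
        rw [hQt] at hQc
        have : t = v := by
          have := hQ.2.2
          rw [hQc] at this
          simpa using this.symm
        rw [this, List.append_nil]
        exact hPlast
      | cons c Q' =>
        rw [List.getLast?_append]
        have hlast : Q.getLast? = some t := hQ.2.2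
        rw [hQc, hQt, List.getLast?_cons_cons] at hlast
        rw [hlast]
        rfl
  · exact List.mem_append.mpr (Or.inl hvP)

lemma ext_sublist_walk {E : V → V → Prop} {s t v : V} {D T w : List V}
    (hD : IsSDomChain E s v D) (hT : IsTDomChain E t v T)
    (hw : IsWalkFromTo E s t w) (hv : v ∈ w) : D ++ T.tail <+ w := by
  obtain ⟨w1, w2, rfl, -⟩ := mem_split_first hv
  have hsp := walk_split hw
  have hDw : D <+ w1 ++ [v] := schain_sublist_walk hD hsp.1
  have hTw : T <+ v :: w2 := by
    have hchain := tchain_schain hT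
    have hwalk : IsWalkFromTo (fun x y => E y x) t v (v :: w2).reverse := walk_swap hsp.2
    have := schain_sublist_walk hchain hwalk
    exact List.reverse_sublist.mp this
  have hTc : T = v :: T.tail := eq_cons_of_head? hT.2.2.2.1
  have hTtail : T.tail <+ w2 := by
    rw [hTc] at hTw
    exact List.cons_sublist_cons.mp hTw
  have := List.Sublist.append hDw hTtail
  simpa using this

lemma key {E : V → V → Prop} {s t v : V} {D T : List V}
    (hD : IsSDomChain E s v D) (hT : IsTDomChain E t v T)
    (hPex : ∃ p, IsPathFromTo E s v p) (hQex : ∃ q, IsPathFromTo E v t q)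
    {X : List V}
    (hX : ∀ w, IsWalkFromTo E s t w → v ∈ w → X <+ w) :
    X <+ D ++ T.tail := by
  classical
  set Pn : ℕ → Prop := fun n => ∀ Q, IsPathFromTo E v t Q → X.drop (X.length - n) <+ Q.tail
    with hPndef
  have hP0 : Pn 0 := by intro Q hQ; simp [hPndef]
  set m := Nat.findGreatest Pn X.length with hm
  have hPm : Pn m := Nat.findGreatest_spec (Nat.zero_le _) hP0
  have hX1 : ∀ p, IsPathFromTo E s v p → X.take (X.length - m) <+ p := by
    intro p hp
    by_contra hcon
    have hmlt : m < X.length := by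
      rcases Nat.lt_or_ge m X.length with h | h
      · exact h
      · exact absurd (by simp [Nat.sub_eq_zero_of_le h]) hcon
    have hnext : Pn (m + 1) := by
      intro Q hQ
      have hw := walk_comp hp.1 hQ.1
      have hXs : X <+ p ++ Q.tail := hX _ hw.1 hw.2
      rw [List.sublist_append_iff] at hXs
      obtain ⟨Y1, Y2, hXeq, hY1, hY2⟩ := hXs
      have hY1len : Y1.length < X.length - m := by
        by_contra hlen
        push_neg at hlen
        apply hcon
        have he : X.take (X.length - m) = Y1.take (X.length - m) := by
          obtain ⟨n1, hn1⟩ : ∃ n1, X.length - m = n1 := ⟨_, rfl⟩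
          rw [hn1] at hlen ⊢
          rw [hXeq, List.take_append_of_le_length hlen]
        rw [he]
        exact (List.take_sublist _ _).trans hY1
      have hdrop : X.drop (X.length - (m + 1)) <+ Y2 := by
        obtain ⟨n2, hn2⟩ : ∃ n2, X.length - (m + 1) = n2 := ⟨_, rfl⟩
        have hk : Y1.length ≤ n2 := by omega
        have harith : n2 = Y1.length + (n2 - Y1.length) := by omega
        rw [hn2, hXeq, harith, List.drop_append]
        rw [List.drop_eq_nil_of_le (Nat.le_add_right Y1.length (n2 - Y1.length)), List.nil_append]
        exact List.drop_sublist _ _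
      exact hdrop.trans hY2
    exact Nat.findGreatest_is_greatest (Nat.lt_succ_self m) hmlt hnext
  have hX1D : X.take (X.length - m) <+ D := subl_of_all_paths hD hPex hX1
  have hX2 : ∀ q, IsPathFromTo (fun x y => E y x) t v q →
      (v :: X.drop (X.length - m)).reverse <+ q := by
    intro q hq
    have hq' : IsPathFromTo E v t q.reverse := path_swap.mpr (by simpa using hq)
    have h2 := hPm q.reverse hq'
    have hqe : q.reverse = v :: q.reverse.tail := eq_cons_of_head? hq'.1.2.1
    have h3 : v :: X.drop (X.length - m) <+ q.reverse := by
      rw [hqe]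
      exact List.cons_sublist_cons.mpr h2
    have := h3.reverse
    simpa using this
  have hSD : IsSDomChain (fun x y => E y x) t v T.reverse := tchain_schain hT
  have hexq : ∃ q, IsPathFromTo (fun x y => E y x) t v q := by
    obtain ⟨q, hq⟩ := hQex
    exact ⟨q.reverse, path_swap.mp hq⟩
  have hrev := subl_of_all_paths hSD hexq hX2
  have hvX2T : v :: X.drop (X.length - m) <+ T := by
    rw [← List.reverse_sublist]
    exact hrev
  have hTc : T = v :: T.tail := eq_cons_of_head? hT.2.2.2.1
  have hX2T : X.drop (X.length - m) <+ T.tail := by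
    rw [hTc] at hvX2T
    exact List.cons_sublist_cons.mp hvX2T
  calc X = X.take (X.length - m) ++ X.drop (X.length - m) := (List.take_append_drop _ _).symm
    _ <+ D ++ T.tail := List.Sublist.append hX1D hX2T

/-- a sequence `X` is `C`-safe for walk covers iff it is a subsequence of
the extension `ext v` of some vertex `v ∈ C`. -/
theorem stmt0 {V : Type*} [Fintype V] (E : V → V → Prop) (s t : V)
    (hs : UniqueSource E s) (ht : UniqueSink E t)
    (hall : ∀ a : V, ∃ w, IsWalkFromTo E s t w ∧ a ∈ w)
    (C : Set V) (ext : V → List V) (hext : ∀ a, IsExtension E s t a (ext a))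
    (X : List V) :
    SafeSeq E s t C X ↔ ∃ v ∈ C, X.Sublist (ext v) := by
  constructor
  · intro hsafe
    by_contra hcon
    push_neg at hcon
    have hch : ∀ v, v ∈ C → ∃ w, IsWalkFromTo E s t w ∧ v ∈ w ∧ ¬ X.Sublist w := by
      intro v hv
      by_contra hno
      push_neg at hno
      apply hcon v hv
      obtain ⟨D, T, hD, hT, hexteq⟩ := hext v
      rw [hexteq]
      obtain ⟨w0, hw0, hvw0⟩ := hall v
      obtain ⟨w1, w2, rfl, -⟩ := mem_split_first hvw0
      have hsp := walk_split hw0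
      obtain ⟨p0, hp0, -⟩ := exists_path E s v _ (w1 ++ [v]) le_rfl hsp.1
      obtain ⟨q0, hq0, -⟩ := exists_path E v t _ (v :: w2) le_rfl hsp.2
      exact key hD hT ⟨p0, hp0⟩ ⟨q0, hq0⟩ hno
    choose f hf using hch
    set P : Set (List V) := {w | ∃ v, ∃ h : v ∈ C, w = f v h} with hPdef
    have hcover : WalkCover E s t C P := by
      constructor
      · rintro w ⟨v, hv, rfl⟩
        exact (hf v hv).1
      · intro c hc
        exact ⟨f c hc, ⟨c, hc, rfl⟩, (hf c hc).2.1⟩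
    obtain ⟨w, hwP, hXw⟩ := hsafe P hcover
    obtain ⟨v, hv, rfl⟩ := hwP
    exact (hf v hv).2.2 hXw
  · rintro ⟨v, hvC, hXv⟩ P hP
    obtain ⟨w, hwP, hvw⟩ := hP.2 v hvC
    refine ⟨w, hwP, hXv.trans ?_⟩
    obtain ⟨D, T, hD, hT, hexteq⟩ := hext v
    rw [hexteq]
    exact ext_sublist_walk hD hT (hP.1 w hwP) hvw


end FD
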